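/- (Universal approximation of l.s.c. functions up to small reparametrization.) Let E be a metric space, 𝒯 a finite nonempty set, and 𝔑 a nonempty family of functions g : 𝒯 × E → [0,∞) with g(t,·) continuous for every t ∈ 𝒯, satisfying the universal approximation property: for every h : 𝒯 × E → [0,∞) with h(t,·) continuous for all t, every compact K ⊆ E and every ι > 0 there exists g ∈ 𝔑 with sup_{t∈𝒯} sup_{ξ∈K} |h(t,ξ) − g(t,ξ)| ≤ ι. Let K ⊆ E be a nonempty compact set, M > 0, and f : 𝒯 × E → ℝ with f(t,·) lower semicontinuous for every t ∈ 𝒯 and 0 ≤ f(t,ξ) ≤ M for all (t,ξ) ∈ 𝒯 × K. Then for every ι > 0 and every r > 0 there exist g ∈ 𝔑 and a Borel measurable map ψ : K → K with sup_{ξ∈K} dist(ψ(ξ), ξ) ≤ r such that for all t ∈ 𝒯 and all ξ ∈ K, |f(t,ψ(ξ)) − g(t,ψ(ξ))| ≤ ι. -/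

import Mathlib

open Classical in
/-- Map each point to the first center in the list whose `r`-ball contains it. -/
private noncomputable def netMap {E : Type*} [MetricSpace E] (r : ℝ) (x₀ : E) :
    List E → E → E
  | [] => fun _ => x₀
  | a :: l => fun ξ => if ξ ∈ Metric.ball a r then a else netMap r x₀ l ξ

private lemma netMap_measurable {E : Type*} [MetricSpace E] [MeasurableSpace E]
    [BorelSpace E] (r : ℝ) (x₀ : E) (l : List E) :
    Measurable (netMap r x₀ l) := by
  induction l with
  | nil => exact measurable_const
  | cons a l ih =>
    classical
    exact Measurable.ite measurableSet_ball measurable_const ih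

private lemma netMap_spec {E : Type*} [MetricSpace E] (r : ℝ) (x₀ : E) (l : List E)
    (ξ : E) (hξ : ∃ a ∈ l, ξ ∈ Metric.ball a r) :
    netMap r x₀ l ξ ∈ l ∧ dist (netMap r x₀ l ξ) ξ ≤ r := by
  induction l with
  | nil => obtain ⟨a, ha, _⟩ := hξ; exact absurd ha List.not_mem_nil
  | cons a l ih =>
    classical
    by_cases hb : ξ ∈ Metric.ball a r
    · refine ⟨?_, ?_⟩ <;> simp only [netMap, if_pos hb]
      · exact List.mem_cons_self
      · rw [dist_comm]; exact le_of_lt (Metric.mem_ball.mp hb)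
    · obtain ⟨b, hbl, hbb⟩ := hξ
      have hbl' : b ∈ l := by
        rcases List.mem_cons.mp hbl with h | h
        · exact absurd (h ▸ hbb) hb
        · exact h
      have := ih ⟨b, hbl', hbb⟩
      refine ⟨?_, ?_⟩ <;> simp only [netMap, if_neg hb]
      · exact List.mem_cons_of_mem a this.1
      · exact this.2

theorem lsc_universal_approximation
    {T E : Type*} [Fintype T] [Nonempty T]
    [MetricSpace E] [MeasurableSpace E] [BorelSpace E]
    (𝔑 : Set (T → E → ℝ)) (h𝔑ne : 𝔑.Nonempty)
    (h𝔑 : ∀ g ∈ 𝔑, (∀ t, Continuous (g t)) ∧ ∀ t (ξ : E), 0 ≤ g t ξ)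
    (hUAP : ∀ h : T → E → ℝ, (∀ t, Continuous (h t)) → (∀ t (ξ : E), 0 ≤ h t ξ) →
      ∀ K : Set E, IsCompact K → ∀ ι : ℝ, 0 < ι →
      ∃ g ∈ 𝔑, ∀ t : T, ∀ ξ ∈ K, |h t ξ - g t ξ| ≤ ι)
    (K : Set E) (hKc : IsCompact K) (hKne : K.Nonempty)
    (M : ℝ) (hM : 0 < M) (f : T → E → ℝ)
    (hlsc : ∀ t, LowerSemicontinuous (f t))
    (h0 : ∀ t, ∀ ξ ∈ K, 0 ≤ f t ξ) (hM' : ∀ t, ∀ ξ ∈ K, f t ξ ≤ M)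
    (ι : ℝ) (hι : 0 < ι) (r : ℝ) (hr : 0 < r) :
    ∃ g ∈ 𝔑, ∃ ψ : E → E, Measurable ψ ∧ Set.MapsTo ψ K K ∧
      (∀ ξ ∈ K, dist (ψ ξ) ξ ≤ r) ∧
      ∀ t : T, ∀ ξ ∈ K, |f t (ψ ξ) - g t (ψ ξ)| ≤ ι := by
  classical
  obtain ⟨ξ₀, hξ₀⟩ := hKne
  -- finite r-net of K
  obtain ⟨s, hsK, hsfin, hscov⟩ := finite_cover_balls_of_compact hKc hr
  set S : Finset E := hsfin.toFinset with hSdef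
  have hSK : ∀ x ∈ S, x ∈ K := fun x hx => hsK (hsfin.mem_toFinset.mp hx)
  -- separation radius ρ
  set ρ : ℝ := if h : S.offDiag.Nonempty then
      (S.offDiag.inf' h fun p => dist p.1 p.2) / 2 else 1 with hρdef
  have hρpos : 0 < ρ := by
    rw [hρdef]
    split_ifs with h
    · have : 0 < S.offDiag.inf' h fun p => dist p.1 p.2 := by
        rw [Finset.lt_inf'_iff]
        rintro ⟨x, y⟩ hxy
        rw [Finset.mem_offDiag] at hxy
        exact dist_pos.mpr hxy.2.2
      linarith
    · norm_num
  have hsep : ∀ x ∈ S, ∀ y ∈ S, x ≠ y → 2 * ρ ≤ dist x y := by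
    intro x hx y hy hxy
    have hmem : (x, y) ∈ S.offDiag := Finset.mem_offDiag.mpr ⟨hx, hy, hxy⟩
    have hne : S.offDiag.Nonempty := ⟨(x, y), hmem⟩
    have := Finset.inf'_le (fun p : E × E => dist p.1 p.2) hmem
    rw [hρdef, dif_pos hne]
    linarith
  -- continuous nonnegative interpolant of f on S
  set h : T → E → ℝ := fun t ξ => ∑ x ∈ S, f t x * max (1 - dist ξ x / ρ) 0 with hhdef
  have hcont : ∀ t, Continuous (h t) := by
    intro t
    apply continuous_finset_sum
    intro x _
    exact continuous_const.mul
      (((continuous_const.sub ((continuous_id.dist continuous_const).div_const ρ)).max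
        continuous_const))
  have hnonneg : ∀ t (ξ : E), 0 ≤ h t ξ := by
    intro t ξ
    apply Finset.sum_nonneg
    intro x hx
    exact mul_nonneg (h0 t x (hSK x hx)) (le_max_right _ _)
  have hinterp : ∀ t, ∀ y ∈ S, h t y = f t y := by
    intro t y hy
    simp only [hhdef]
    rw [Finset.sum_eq_single y]
    · simp [dist_self]
    · intro x hx hxy
      have h2ρ : 2 * ρ ≤ dist y x := hsep y hy x hx (Ne.symm hxy)
      have : max (1 - dist y x / ρ) 0 = 0 := by
        apply max_eq_right
        rw [sub_nonpos, le_div_iff₀ hρpos]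
        nlinarith
      rw [this, mul_zero]
    · intro hy'; exact absurd hy hy'
  -- approximate h by some g ∈ 𝔑
  obtain ⟨g, hg𝔑, hg⟩ := hUAP h hcont hnonneg K hKc ι hι
  -- reparametrization ψ
  set L : List E := S.toList with hLdef
  refine ⟨g, hg𝔑, netMap r ξ₀ L, netMap_measurable r ξ₀ L, ?_, ?_, ?_⟩
  all_goals
    have hspec : ∀ ξ ∈ K, netMap r ξ₀ L ξ ∈ L ∧ dist (netMap r ξ₀ L ξ) ξ ≤ r := by
      intro ξ hξ
      apply netMap_spec
      have := hscov hξ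
      simp only [Set.mem_iUnion] at this
      obtain ⟨a, ha, hball⟩ := this
      exact ⟨a, by rw [hLdef]; exact Finset.mem_toList.mpr (hsfin.mem_toFinset.mpr ha), hball⟩
  · intro ξ hξ
    exact hSK _ (Finset.mem_toList.mp (hspec ξ hξ).1)
  · intro ξ hξ
    exact (hspec ξ hξ).2
  · intro t ξ hξ
    obtain ⟨hmem, _⟩ := hspec ξ hξ
    have hS : netMap r ξ₀ L ξ ∈ S := Finset.mem_toList.mp hmem
    have := hg t (netMap r ξ₀ L ξ) (hSK _ hS)
    rwa [hinterp t _ hS] at this
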